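/- (Zero-coefficient property of certain models for linear regression) Consider a feature matrix X ∈ ℝ^{n×d} with a set M of missing entries, where each missing entry may take any real value, and a label vector y ∈ ℝⁿ. Suppose w ∈ ℝ^d is a certain model, i.e., w minimizes ‖Xʳw − y‖₂² for every repair Xʳ of X. Then w_j = 0 for every incomplete feature j (every column j containing a missing entry). -/
import Mathlib


/-- Squared-error linear regression loss `‖Xw − y‖₂²`. -/
def lrLoss {n d : ℕ} (X : Fin n → Fin d → ℝ) (y : Fin n → ℝ) (w : Fin d → ℝ) : ℝ :=
  ∑ i, ((∑ j, X i j * w j) - y i) ^ 2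

/-- Zero-coefficient property: if `w` minimizes the least-squares loss over every
repair of `X` (where each missing entry in `M` may take any real value), then the
coefficient of every incomplete feature is zero. -/
theorem certain_model_zero_on_incomplete_features
    (n d : ℕ) (X : Fin n → Fin d → ℝ) (M : Set (Fin n × Fin d)) (y : Fin n → ℝ)
    (w : Fin d → ℝ)
    (hw : ∀ Xr : Fin n → Fin d → ℝ, (∀ i j, (i, j) ∉ M → Xr i j = X i j) →
      ∀ w' : Fin d → ℝ, lrLoss Xr y w ≤ lrLoss Xr y w')
    (j : Fin d) (hj : ∃ i, (i, j) ∈ M) :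
    w j = 0 := by
  obtain ⟨i₀, hi₀⟩ := hj
  by_contra hwj
  set w' : Fin d → ℝ := fun k => if k = j then 0 else w k with hw'def
  set C := lrLoss X y w' with hCdef
  set s : ℝ := |C| + 1 with hsdef
  set c : ℝ := (∑ k, if k = j then 0 else X i₀ k * w k) - y i₀ with hcdef
  set t : ℝ := (s - c) / w j with htdef
  set Xr : Fin n → Fin d → ℝ := fun i k => if i = i₀ ∧ k = j then t else X i k with hXrdef
  have hrepair : ∀ i k, (i, k) ∉ M → Xr i k = X i k := by
    intro i k hik
    simp only [hXrdef]
    split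
    · next h => exact absurd (h.1 ▸ h.2 ▸ hi₀) hik
    · rfl
  have hle := hw Xr hrepair w'
  -- lrLoss Xr y w' = C
  have hXrw' : lrLoss Xr y w' = C := by
    unfold lrLoss
    refine Finset.sum_congr rfl fun i _ => ?_
    congr 1
    congr 1
    refine Finset.sum_congr rfl fun k _ => ?_
    by_cases hk : k = j
    · simp [hw'def, hk]
    · simp [hXrdef, hw'def, hk]
  -- lrLoss Xr y w ≥ s^2
  have hrow : (∑ k, Xr i₀ k * w k) - y i₀ = s := by
    have : (∑ k, Xr i₀ k * w k) = t * w j + (c + y i₀) := by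
      rw [hcdef]
      have : (∑ k, Xr i₀ k * w k)
          = ∑ k, ((if k = j then t * w j else 0) + (if k = j then 0 else X i₀ k * w k)) := by
        refine Finset.sum_congr rfl fun k _ => ?_
        by_cases hk : k = j
        · simp [hXrdef, hk]
        · simp [hXrdef, hk]
      rw [this, Finset.sum_add_distrib, Finset.sum_ite_eq' Finset.univ j]
      simp
    rw [this, htdef]
    field_simp
    ring
  have hlow : s ^ 2 ≤ lrLoss Xr y w := by
    unfold lrLoss
    calc s ^ 2 = ((∑ k, Xr i₀ k * w k) - y i₀) ^ 2 := by rw [hrow]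
      _ ≤ _ := Finset.single_le_sum (f := fun i => ((∑ k, Xr i k * w k) - y i) ^ 2)
        (fun i _ => sq_nonneg _) (Finset.mem_univ i₀)
  have hs1 : (1 : ℝ) ≤ s := by
    have := abs_nonneg C
    simp only [hsdef]; linarith
  have hss : s ≤ s ^ 2 := by nlinarith
  have hCs : C < s := lt_of_le_of_lt (le_abs_self C) (by simp [hsdef])
  rw [hXrw'] at hle
  linarith
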